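/- Let f, g : [-1,1] → [-1,1] be continuous maps with f(0) = g(0) = 0, and let x₁, x₂ satisfy -1 ≤ x₁ < 0 < x₂ ≤ 1. Then ⟨x₁,x₂⟩ is a positive radial departure of f ∘ g if and only if either (1) ⟨x₁,x₂⟩ is a positive radial departure of g and ⟨g(x₁),g(x₂)⟩ is a positive radial departure of f, or (2) ⟨x₁,x₂⟩ is a negative radial departure of g and ⟨g(x₂),g(x₁)⟩ is a negative radial departure of f. -/
import Mathlib


open Set

/-- A positive radial departure of `f`. -/
def PosRD (f : ℝ → ℝ) (x₁ x₂ : ℝ) : Prop :=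
  -1 ≤ x₁ ∧ x₁ < 0 ∧ 0 < x₂ ∧ x₂ ≤ 1 ∧ f '' Ioo x₁ x₂ = Ioo (f x₁) (f x₂)

/-- A negative radial departure of `f`. -/
def NegRD (f : ℝ → ℝ) (x₁ x₂ : ℝ) : Prop :=
  -1 ≤ x₁ ∧ x₁ < 0 ∧ 0 < x₂ ∧ x₂ ≤ 1 ∧ f '' Ioo x₁ x₂ = Ioo (f x₂) (f x₁)

/-- A radial departure of `f` (of either orientation). -/
def RadialDeparture (f : ℝ → ℝ) (x₁ x₂ : ℝ) : Prop := PosRD f x₁ x₂ ∨ NegRD f x₁ x₂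

/-- A (right) departure of `g` (viewed as a map on `[0,1]`). -/
def Departure (g : ℝ → ℝ) (x : ℝ) : Prop := 0 < x ∧ x ≤ 1 ∧ g x ∉ g '' Ico 0 x

/-- A left departure of `g` (viewed as a map on `[-1,0]`). -/
def LeftDeparture (g : ℝ → ℝ) (x : ℝ) : Prop := -1 ≤ x ∧ x < 0 ∧ g x ∉ g '' Ioc x 0

/-- A (right) contour point of `g`: a departure `α` such that every departure past `α`
is preceded (within `(α, x]`) by a departure of orientation opposite to that of `α`. -/
def ContourPoint (g : ℝ → ℝ) (α : ℝ) : Prop :=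
  Departure g α ∧
    ∀ x, Departure g x → α < x → ∃ y, Departure g y ∧ α < y ∧ y ≤ x ∧ g α * g y < 0

/-- `[ym, yp]` is a liftable range for `t`. -/
def LiftableRange (t : ℝ → ℝ) (ym yp : ℝ) : Prop :=
  -1 ≤ ym ∧ ym ≤ 0 ∧ 0 ≤ yp ∧ yp ≤ 1 ∧
  t '' Icc ym 0 ⊆ t '' Icc 0 1 ∧
  ¬ ∃ y₁ y₂, RadialDeparture t y₁ y₂ ∧ ym ≤ y₁ ∧ yp < y₂

/-- `f` is linear (affine) on the interval `[a,b]`. -/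
def LinearOn (f : ℝ → ℝ) (a b : ℝ) : Prop :=
  ∀ x ∈ Icc a b, (b - a) * f x = (b - x) * f a + (x - a) * f b

/-- `f` is piecewise-linear on `[-1,1]`. -/
def PiecewiseLinear (f : ℝ → ℝ) : Prop :=
  ∃ n : ℕ, ∃ c : ℕ → ℝ, c 0 = -1 ∧ c n = 1 ∧ (∀ i < n, c i < c (i + 1)) ∧
    ∀ i < n, LinearOn f (c i) (c (i + 1))

/-- `t` is the contour factor of `g` (for maps on `[0,1]`): the contour points of `g`
are `0 = α₀ < α₁ < ⋯ < α_n`, `t (i/n) = g (α i)`, and `t` is linear in between. -/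
def IsContourFactor (g t : ℝ → ℝ) : Prop :=
  ∃ n : ℕ, 0 < n ∧ ∃ α : ℕ → ℝ, α 0 = 0 ∧ (∀ i < n, α i < α (i + 1)) ∧
    (∀ x, ContourPoint g x ↔ ∃ i, 1 ≤ i ∧ i ≤ n ∧ x = α i) ∧
    (∀ i ≤ n, t ((i : ℝ) / (n : ℝ)) = g (α i)) ∧
    (∀ i < n, LinearOn t ((i : ℝ) / (n : ℝ)) (((i : ℝ) + 1) / (n : ℝ)))

/-- `t` is the radial contour factor of `f`: its restriction to `[0,1]` is the contour
factor of `f|[0,1]`, and `t|[-1,0] ∘ r` is the contour factor of `f|[-1,0] ∘ r`,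
where `r x = -x`. -/
def IsRadialContourFactor (f t : ℝ → ℝ) : Prop :=
  IsContourFactor f t ∧ IsContourFactor (fun x => f (-x)) (fun x => t (-x))

/-- `f` is non-constant on each of `[0,1]` and `[-1,0]`. -/
def NonConstSides (f : ℝ → ℝ) : Prop :=
  (∃ a ∈ Icc (0:ℝ) 1, ∃ b ∈ Icc (0:ℝ) 1, f a ≠ f b) ∧
  (∃ a ∈ Icc (-1:ℝ) 0, ∃ b ∈ Icc (-1:ℝ) 0, f a ≠ f b)


lemma interval_key (S : Set ℝ) (hS : S.OrdConnected) (h0 : (0:ℝ) ∈ S)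
    (hbdd : BddBelow S) (hbdd' : BddAbove S) (a b : ℝ)
    (ha : a ∈ closure S) (hb : b ∈ closure S)
    (ha' : a ∉ S) (hb' : b ∉ S) (hab : a ≠ b) :
    (S = Ioo a b ∧ a < 0 ∧ 0 < b) ∨ (S = Ioo b a ∧ b < 0 ∧ 0 < a) := by
  have hne : S.Nonempty := ⟨0, h0⟩
  set m := sInf S with hm
  set M := sSup S with hM
  have hsub : S ⊆ Icc m M := fun s hs => ⟨csInf_le hbdd hs, le_csSup hbdd' hs⟩
  have hcl : closure S ⊆ Icc m M := closure_minimal hsub isClosed_Icc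
  have hmid : ∀ x, m < x → x < M → x ∈ S := by
    intro x hx1 hx2
    obtain ⟨u, hu, hux⟩ := exists_lt_of_csInf_lt hne hx1
    obtain ⟨v, hv, hxv⟩ := exists_lt_of_lt_csSup hne hx2
    exact hS.out hu hv ⟨hux.le, hxv.le⟩
  have hend : ∀ c : ℝ, c ∈ closure S → c ∉ S → c = m ∨ c = M := by
    intro c hc hc'
    rcases hcl hc with ⟨hc1, hc2⟩
    rcases eq_or_lt_of_le hc1 with h | h
    · exact Or.inl h.symm
    rcases eq_or_lt_of_le hc2 with h' | h'
    · exact Or.inr h'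
    exact absurd (hmid c h h') hc'
  have hSeq : m ∉ S → M ∉ S → S = Ioo m M := by
    intro hmS hMS
    ext x
    constructor
    · intro hx
      rcases hsub hx with ⟨hx1, hx2⟩
      exact ⟨lt_of_le_of_ne hx1 (fun h => hmS (h ▸ hx)), lt_of_le_of_ne hx2 (fun h => hMS (h.symm ▸ hx))⟩
    · intro hx
      exact hmid x hx.1 hx.2
  rcases hend a ha ha' with haa | haa <;> rcases hend b hb hb' with hbb | hbb
  · exact absurd (haa.trans hbb.symm) hab
  · left
    have hSab : S = Ioo a b := haa ▸ hbb ▸ hSeq (haa ▸ ha') (hbb ▸ hb')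
    have h0' : (0:ℝ) ∈ Ioo a b := hSab ▸ h0
    exact ⟨hSab, h0'.1, h0'.2⟩
  · right
    have hSab : S = Ioo b a := hbb ▸ haa ▸ hSeq (hbb ▸ hb') (haa ▸ ha')
    have h0' : (0:ℝ) ∈ Ioo b a := hSab ▸ h0
    exact ⟨hSab, h0'.1, h0'.2⟩
  · exact absurd (haa.trans hbb.symm) hab

theorem stmt2 (f g : ℝ → ℝ) (hf : Continuous f) (hg : Continuous g)
    (hfmap : MapsTo f (Icc (-1:ℝ) 1) (Icc (-1:ℝ) 1))
    (hgmap : MapsTo g (Icc (-1:ℝ) 1) (Icc (-1:ℝ) 1))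
    (hf0 : f 0 = 0) (hg0 : g 0 = 0)
    (x₁ x₂ : ℝ) (h1 : -1 ≤ x₁) (h2 : x₁ < 0) (h3 : 0 < x₂) (h4 : x₂ ≤ 1) :
    PosRD (f ∘ g) x₁ x₂ ↔
      (PosRD g x₁ x₂ ∧ PosRD f (g x₁) (g x₂)) ∨
      (NegRD g x₁ x₂ ∧ NegRD f (g x₂) (g x₁)) := by
  constructor
  · intro hpos
    obtain ⟨_, _, _, _, heq⟩ := hpos
    have heq' : f '' (g '' Ioo x₁ x₂) = Ioo (f (g x₁)) (f (g x₂)) := by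
      rw [← image_comp]; exact heq
    set S := g '' Ioo x₁ x₂ with hSdef
    have hIsub : Ioo x₁ x₂ ⊆ Icc (-1:ℝ) 1 := fun y hy =>
      ⟨h1.trans hy.1.le, hy.2.le.trans h4⟩
    have hS0 : (0:ℝ) ∈ S := ⟨0, ⟨h2, h3⟩, hg0⟩
    have hSconn : S.OrdConnected :=
      (isPreconnected_Ioo.image g hg.continuousOn).ordConnected
    have hSbdd : S ⊆ Icc (-1:ℝ) 1 := fun s ⟨y, hy, hys⟩ => hys ▸ hgmap (hIsub hy)
    have hbddB : BddBelow S := ⟨-1, fun s hs => (hSbdd hs).1⟩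
    have hbddA : BddAbove S := ⟨1, fun s hs => (hSbdd hs).2⟩
    have hclsub : g '' Icc x₁ x₂ ⊆ closure S := by
      rw [hSdef, ← closure_Ioo (h2.trans h3).ne]
      exact image_closure_subset_closure_image hg
    have ha : g x₁ ∈ closure S := hclsub ⟨x₁, ⟨le_refl _, (h2.trans h3).le⟩, rfl⟩
    have hb : g x₂ ∈ closure S := hclsub ⟨x₂, ⟨(h2.trans h3).le, le_refl _⟩, rfl⟩
    have ha' : g x₁ ∉ S := by
      intro hmem
      have : f (g x₁) ∈ Ioo (f (g x₁)) (f (g x₂)) := heq' ▸ mem_image_of_mem f hmem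
      exact lt_irrefl _ this.1
    have hb' : g x₂ ∉ S := by
      intro hmem
      have : f (g x₂) ∈ Ioo (f (g x₁)) (f (g x₂)) := heq' ▸ mem_image_of_mem f hmem
      exact lt_irrefl _ this.2
    have hab : g x₁ ≠ g x₂ := by
      intro h
      have hne : (f '' S).Nonempty := ⟨f 0, mem_image_of_mem f hS0⟩
      rw [heq', h] at hne
      exact (Set.not_nonempty_empty) (Ioo_self (f (g x₂)) ▸ hne)
    have hga1' : g x₁ ∈ Icc (-1:ℝ) 1 := hgmap ⟨h1, (h2.trans h3).le.trans h4⟩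
    have hga2' : g x₂ ∈ Icc (-1:ℝ) 1 := hgmap ⟨h1.trans (h2.trans h3).le, h4⟩
    rcases interval_key S hSconn hS0 hbddB hbddA (g x₁) (g x₂) ha hb ha' hb' hab with
      ⟨hSeq, hlt1, hlt2⟩ | ⟨hSeq, hlt1, hlt2⟩
    · left
      refine ⟨⟨h1, h2, h3, h4, hSeq⟩, hga1'.1, hlt1, hlt2, hga2'.2, ?_⟩
      rw [← hSeq]; exact heq'
    · right
      refine ⟨⟨h1, h2, h3, h4, hSeq⟩, hga2'.1, hlt1, hlt2, hga1'.2, ?_⟩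
      rw [← hSeq]; exact heq'
  · rintro (⟨⟨_, _, _, _, hg5⟩, _, _, _, _, hf5⟩ | ⟨⟨_, _, _, _, hg5⟩, _, _, _, _, hf5⟩) <;>
      exact ⟨h1, h2, h3, h4, by rw [image_comp, hg5, hf5]; rfl⟩
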